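/- Let X be an infinite compact metric space, let A be a unital simple C*-algebra, and let α be a *-automorphism of C(X,A) such that C(X,A) is α-simple. Then for every positive element f of C(X,A), every finite set f₁, ..., fₙ ∈ C(X,A), every choice of positive integers s₁, ..., sₙ, and every ε > 0, there exists a positive element g ∈ C(X,A) with ‖g‖ = 1 such that ‖g f g‖ ≥ ‖f‖ − ε and ‖g fᵢ α^{sᵢ}(g)‖ ≤ ε for i = 1, ..., n. -/

import Mathlib

open scoped ComplexConjugate

section Aux

variable {X : Type*} [MetricSpace X] [CompactSpace X]
variable {A : Type*} [NormedRing A] [StarRing A] [CStarRing A] [NormedAlgebra ℂ A]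
  [CompleteSpace A] [StarModule ℂ A]

/-- The canonical embedding `C(X,ℂ) → C(X,A)`. -/
noncomputable def iotaA (X : Type*) [MetricSpace X] [CompactSpace X]
    (A : Type*) [NormedRing A] [StarRing A] [CStarRing A] [NormedAlgebra ℂ A]
    [CompleteSpace A] [StarModule ℂ A] : C(X, ℂ) →⋆ₐ[ℂ] C(X, A) :=
  ContinuousMap.compStarAlgHom X (StarAlgHom.ofId ℂ A) (continuous_algebraMap ℂ A)

lemma iotaA_apply (k : C(X, ℂ)) (x : X) : iotaA X A k x = k x • (1 : A) := by
  simp [iotaA, ContinuousMap.compStarAlgHom, StarAlgHom.ofId, Algebra.ofId,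
    Algebra.algebraMap_eq_smul_one]
  exact Algebra.algebraMap_eq_smul_one (k x)

lemma iotaA_injective [Nontrivial A] : Function.Injective (iotaA X A) := by
  intro k k' h
  ext x
  have := congrArg (fun w : C(X, A) => w x) h
  simp only [iotaA_apply] at this
  have h2 : (k x - k' x) • (1 : A) = 0 := by rw [sub_smul, this, sub_self]
  have h3 : ‖(k x - k' x) • (1 : A)‖ = ‖k x - k' x‖ := by
    rw [norm_smul, CStarRing.norm_one, mul_one]
  rw [h2, norm_zero] at h3
  have := sub_eq_zero.mp (norm_eq_zero.mp h3.symm)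
  exact this

lemma iotaA_central (k : C(X, ℂ)) (w : C(X, A)) :
    iotaA X A k * w = w * iotaA X A k := by
  ext x
  simp only [ContinuousMap.mul_apply, iotaA_apply]
  rw [smul_mul_assoc, mul_smul_comm, one_mul, mul_one]

end Aux

section Central

variable {A : Type*} [NormedRing A] [StarRing A] [CStarRing A] [NormedAlgebra ℂ A]
  [CompleteSpace A] [StarModule ℂ A] [Nontrivial A]

/-- In a simple unital C*-algebra, central elements are scalar. -/
lemma central_eq_smul_one
    (hA : ∀ I : TwoSidedIdeal A, IsClosed (I : Set A) → I = ⊥ ∨ I = ⊤)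
    (z : A) (hz : ∀ a : A, z * a = a * z) : ∃ c : ℂ, z = c • (1 : A) := by
  obtain ⟨l, hl⟩ := spectrum.nonempty z
  refine ⟨l, ?_⟩
  set w : A := z - l • (1 : A) with hw
  have hwc : ∀ a : A, w * a = a * w := by
    intro a
    simp only [hw, sub_mul, mul_sub, hz a, smul_mul_assoc, mul_smul_comm, one_mul, mul_one]
  -- the closed two-sided ideal generated by `w`
  let W : Submodule ℂ A := LinearMap.range (LinearMap.mulLeft ℂ w)
  have hWmem : ∀ a : A, w * a ∈ W := fun a => ⟨a, rfl⟩
  let Wc := W.topologicalClosure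
  have hmull : ∀ {x y : A}, y ∈ (Wc : Set A) → x * y ∈ (Wc : Set A) := by
    intro x y hy
    have : Continuous fun t : A => x * t := continuous_const.mul continuous_id
    refine map_mem_closure (f := fun t : A => x * t) this hy ?_
    rintro t ⟨a, rfl⟩
    simp only [LinearMap.mulLeft_apply]
    have hx1 : x * (w * a) = w * (x * a) := by rw [← mul_assoc, ← hwc x, mul_assoc]
    rw [hx1]
    exact hWmem (x * a)
  have hmulr : ∀ {x y : A}, x ∈ (Wc : Set A) → x * y ∈ (Wc : Set A) := by
    intro x y hx
    have : Continuous fun t : A => t * y := continuous_id.mul continuous_const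
    refine map_mem_closure (f := fun t : A => t * y) this hx ?_
    rintro t ⟨a, rfl⟩
    simp only [LinearMap.mulLeft_apply]
    rw [mul_assoc]
    exact hWmem (a * y)
  let I : TwoSidedIdeal A := TwoSidedIdeal.mk' (Wc : Set A)
    Wc.zero_mem (fun hx hy => Wc.add_mem hx hy)
    (fun hx => Wc.neg_mem hx) hmull hmulr
  have hIclosed : IsClosed (I : Set A) := by
    have : (I : Set A) = (Wc : Set A) := TwoSidedIdeal.coe_mk' _ _ _ _ _ _
    rw [this]
    exact W.isClosed_topologicalClosure
  rcases hA I hIclosed with hbot | htop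
  · have hwI : w ∈ I := by
      rw [TwoSidedIdeal.mem_mk']
      exact W.le_topologicalClosure (by simpa using hWmem 1)
    rw [hbot, TwoSidedIdeal.mem_bot] at hwI
    rw [← sub_eq_zero, ← hw]; exact hwI
  · exfalso
    have h1I : (1 : A) ∈ I := by rw [htop]; exact TwoSidedIdeal.mem_top A
    rw [TwoSidedIdeal.mem_mk'] at h1I
    have h1I : (1 : A) ∈ closure (W : Set A) := by
      rwa [← Submodule.topologicalClosure_coe]
    rw [Metric.mem_closure_iff] at h1I
    obtain ⟨y, hyW, hy1⟩ := h1I 1 one_pos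
    obtain ⟨a, rfl⟩ := hyW
    simp only [LinearMap.mulLeft_apply] at hy1
    have hunit : IsUnit (w * a) := by
      have : ‖1 - w * a‖ < 1 := by rwa [dist_eq_norm] at hy1
      exact sub_sub_self 1 (w * a) ▸ (Units.oneSub (1 - w * a) this).isUnit
    obtain ⟨u, hu⟩ := hunit
    have h1 : w * (a * ↑u⁻¹) = 1 := by
      rw [← mul_assoc, ← hu, u.mul_inv]
    have h2 : (a * ↑u⁻¹) * w = 1 := by rw [← hwc (a * ↑u⁻¹), h1]
    have hwu : IsUnit w := ⟨⟨w, a * ↑u⁻¹, h1, h2⟩, rfl⟩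
    rw [spectrum.mem_iff] at hl
    exact hl (by simpa [Algebra.algebraMap_eq_smul_one, hw] using hwu.neg)

end Central

section Gamma

variable {X : Type*} [MetricSpace X] [CompactSpace X]
variable {A : Type*} [NormedRing A] [StarRing A] [CStarRing A] [NormedAlgebra ℂ A]
  [CompleteSpace A] [StarModule ℂ A] [Nontrivial A]

/-- A pointwise-scalar continuous map is in the range of `iotaA`. -/
lemma exists_iotaA_eq (u : C(X, A)) (hu : ∀ x, ∃ c : ℂ, u x = c • (1 : A)) :
    ∃ k : C(X, ℂ), u = iotaA X A k := by
  obtain ⟨φ, hφ1, hφx⟩ := exists_dual_vector ℂ (1 : A) (by rw [CStarRing.norm_one]; exact one_ne_zero)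
  rw [CStarRing.norm_one] at hφx
  refine ⟨⟨fun x => φ (u x), φ.continuous.comp u.continuous⟩, ?_⟩
  ext x
  obtain ⟨c, hc⟩ := hu x
  simp only [iotaA_apply, ContinuousMap.coe_mk, hc, map_smul, hφx]
  norm_num

lemma alpha_iota_scalar
    (hA : ∀ I : TwoSidedIdeal A, IsClosed (I : Set A) → I = ⊥ ∨ I = ⊤)
    (α : C(X, A) ≃⋆ₐ[ℂ] C(X, A)) (k : C(X, ℂ)) :
    ∃ k' : C(X, ℂ), α (iotaA X A k) = iotaA X A k' := by
  set u := α (iotaA X A k) with hu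
  have hcentralCXA : ∀ v : C(X, A), u * v = v * u := by
    intro v
    have : v = α (α.symm v) := (α.apply_symm_apply v).symm
    rw [this, hu, ← map_mul, ← map_mul, iotaA_central]
  have hcentral : ∀ x, ∀ a : A, u x * a = a * u x := by
    intro x a
    have := congrArg (fun w : C(X, A) => w x) (hcentralCXA (ContinuousMap.const X a))
    simpa using this
  refine exists_iotaA_eq u fun x => central_eq_smul_one hA (u x) (hcentral x)

/-- The scalar function implementing `α` on `iotaA`. -/
noncomputable def gammaFun
    (hA : ∀ I : TwoSidedIdeal A, IsClosed (I : Set A) → I = ⊥ ∨ I = ⊤)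
    (α : C(X, A) ≃⋆ₐ[ℂ] C(X, A)) (k : C(X, ℂ)) : C(X, ℂ) :=
  Classical.choose (alpha_iota_scalar hA α k)

lemma gammaFun_spec
    (hA : ∀ I : TwoSidedIdeal A, IsClosed (I : Set A) → I = ⊥ ∨ I = ⊤)
    (α : C(X, A) ≃⋆ₐ[ℂ] C(X, A)) (k : C(X, ℂ)) :
    α (iotaA X A k) = iotaA X A (gammaFun hA α k) :=
  Classical.choose_spec (alpha_iota_scalar hA α k)

section GammaFacts

variable (hA : ∀ I : TwoSidedIdeal A, IsClosed (I : Set A) → I = ⊥ ∨ I = ⊤)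
    (α : C(X, A) ≃⋆ₐ[ℂ] C(X, A))

lemma gammaFun_one : gammaFun hA α 1 = 1 := by
  apply iotaA_injective (X := X) (A := A)
  rw [← gammaFun_spec hA α, map_one, map_one]

lemma gammaFun_mul (k₁ k₂ : C(X, ℂ)) :
    gammaFun hA α (k₁ * k₂) = gammaFun hA α k₁ * gammaFun hA α k₂ := by
  apply iotaA_injective (X := X) (A := A)
  rw [map_mul, ← gammaFun_spec hA α, ← gammaFun_spec hA α, ← gammaFun_spec hA α,
    ← map_mul, ← map_mul]

lemma gammaFun_zero : gammaFun hA α 0 = 0 := by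
  apply iotaA_injective (X := X) (A := A)
  rw [← gammaFun_spec hA α, map_zero, map_zero]

lemma gammaFun_add (k₁ k₂ : C(X, ℂ)) :
    gammaFun hA α (k₁ + k₂) = gammaFun hA α k₁ + gammaFun hA α k₂ := by
  apply iotaA_injective (X := X) (A := A)
  rw [map_add, ← gammaFun_spec hA α, ← gammaFun_spec hA α, ← gammaFun_spec hA α,
    ← map_add, ← map_add]

lemma gammaFun_algebraMap (c : ℂ) :
    gammaFun hA α (algebraMap ℂ C(X, ℂ) c) = algebraMap ℂ C(X, ℂ) c := by
  apply iotaA_injective (X := X) (A := A)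
  rw [← gammaFun_spec hA α, AlgHomClass.commutes, AlgHomClass.commutes]

lemma gammaFun_star (k : C(X, ℂ)) :
    gammaFun hA α (star k) = star (gammaFun hA α k) := by
  apply iotaA_injective (X := X) (A := A)
  rw [map_star (iotaA X A) (gammaFun hA α k), ← gammaFun_spec hA α, ← gammaFun_spec hA α,
    ← map_star α (iotaA X A k), ← map_star (iotaA X A) k]

end GammaFacts

/-- The automorphism of `C(X,ℂ)` induced by `α`. -/
noncomputable def gammaHom
    (hA : ∀ I : TwoSidedIdeal A, IsClosed (I : Set A) → I = ⊥ ∨ I = ⊤)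
    (α : C(X, A) ≃⋆ₐ[ℂ] C(X, A)) : C(X, ℂ) →⋆ₐ[ℂ] C(X, ℂ) where
  toFun := gammaFun hA α
  map_one' := gammaFun_one hA α
  map_mul' := gammaFun_mul hA α
  map_zero' := gammaFun_zero hA α
  map_add' := gammaFun_add hA α
  commutes' := gammaFun_algebraMap hA α
  map_star' := gammaFun_star hA α

lemma gammaHom_spec
    (hA : ∀ I : TwoSidedIdeal A, IsClosed (I : Set A) → I = ⊥ ∨ I = ⊤)
    (α : C(X, A) ≃⋆ₐ[ℂ] C(X, A)) (k : C(X, ℂ)) :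
    α (iotaA X A k) = iotaA X A (gammaHom hA α k) :=
  gammaFun_spec hA α k

/-- The continuous self-map of `X` induced by `α`. -/
noncomputable def sigmaMap
    (hA : ∀ I : TwoSidedIdeal A, IsClosed (I : Set A) → I = ⊥ ∨ I = ⊤)
    (α : C(X, A) ≃⋆ₐ[ℂ] C(X, A)) : X → X := fun x =>
  (WeakDual.CharacterSpace.homeoEval X ℂ).symm
    (WeakDual.CharacterSpace.compContinuousMap (gammaHom hA α)
      (WeakDual.CharacterSpace.homeoEval X ℂ x))

lemma sigmaMap_continuous
    (hA : ∀ I : TwoSidedIdeal A, IsClosed (I : Set A) → I = ⊥ ∨ I = ⊤)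
    (α : C(X, A) ≃⋆ₐ[ℂ] C(X, A)) : Continuous (sigmaMap hA α) := by
  unfold sigmaMap
  exact (WeakDual.CharacterSpace.homeoEval X ℂ).symm.continuous.comp
    ((WeakDual.CharacterSpace.compContinuousMap (gammaHom hA α)).continuous.comp
      (WeakDual.CharacterSpace.homeoEval X ℂ).continuous)

lemma sigmaMap_spec
    (hA : ∀ I : TwoSidedIdeal A, IsClosed (I : Set A) → I = ⊥ ∨ I = ⊤)
    (α : C(X, A) ≃⋆ₐ[ℂ] C(X, A)) (k : C(X, ℂ)) (x : X) :
    k (sigmaMap hA α x) = gammaHom hA α k x := by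
  have h1 : (WeakDual.CharacterSpace.homeoEval X ℂ) (sigmaMap hA α x) =
      WeakDual.CharacterSpace.compContinuousMap (gammaHom hA α)
        (WeakDual.CharacterSpace.homeoEval X ℂ x) := by
    unfold sigmaMap
    exact (WeakDual.CharacterSpace.homeoEval X ℂ).apply_symm_apply _
  have := congrArg (fun χ : WeakDual.characterSpace ℂ C(X, ℂ) => χ k) h1
  exact this

end Gamma

section Bump

variable {X : Type*} [MetricSpace X] [CompactSpace X]

/-- A bump function at `x₀` supported in the ball of radius `r`. -/
noncomputable def bumpFn (x₀ : X) (r : ℝ) : C(X, ℝ) :=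
  ⟨fun z => max 0 (1 - dist z x₀ / r),
    continuous_const.max (continuous_const.sub ((continuous_id.dist continuous_const).div_const r))⟩

lemma bumpFn_self (x₀ : X) (r : ℝ) : bumpFn x₀ r x₀ = 1 := by
  simp [bumpFn]

lemma bumpFn_nonneg (x₀ : X) (r : ℝ) (z : X) : 0 ≤ bumpFn x₀ r z := le_max_left _ _

lemma bumpFn_le_one (x₀ : X) (r : ℝ) (hr : 0 < r) (z : X) : bumpFn x₀ r z ≤ 1 := by
  simp only [bumpFn, ContinuousMap.coe_mk]
  refine max_le zero_le_one ?_
  have : 0 ≤ dist z x₀ / r := div_nonneg dist_nonneg hr.le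
  linarith

lemma bumpFn_support (x₀ : X) (r : ℝ) (hr : 0 < r) (z : X) (hz : bumpFn x₀ r z ≠ 0) :
    dist z x₀ < r := by
  simp only [bumpFn, ContinuousMap.coe_mk] at hz
  by_contra hge
  push_neg at hge
  have : 1 - dist z x₀ / r ≤ 0 := by
    have : 1 ≤ dist z x₀ / r := (one_le_div hr).mpr hge
    linarith
  exact hz (max_eq_left this)

/-- Complex version of the bump function. -/
noncomputable def bumpC (x₀ : X) (r : ℝ) : C(X, ℂ) :=
  ⟨fun z => (bumpFn x₀ r z : ℂ), Complex.continuous_ofReal.comp (bumpFn x₀ r).continuous⟩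

lemma bumpC_apply (x₀ : X) (r : ℝ) (z : X) : bumpC x₀ r z = (bumpFn x₀ r z : ℂ) := rfl

end Bump

section Iterate

variable {X : Type*} [MetricSpace X] [CompactSpace X]
variable {A : Type*} [NormedRing A] [StarRing A] [CStarRing A] [NormedAlgebra ℂ A]
  [CompleteSpace A] [StarModule ℂ A] [Nontrivial A]

lemma alpha_iota (hA : ∀ I : TwoSidedIdeal A, IsClosed (I : Set A) → I = ⊥ ∨ I = ⊤)
    (α : C(X, A) ≃⋆ₐ[ℂ] C(X, A)) (k : C(X, ℂ)) :
    α (iotaA X A k) = iotaA X A (k.comp ⟨sigmaMap hA α, sigmaMap_continuous hA α⟩) := by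
  rw [gammaHom_spec hA α k]
  congr 1
  ext x
  simp only [ContinuousMap.comp_apply, ContinuousMap.coe_mk]
  exact (sigmaMap_spec hA α k x).symm

lemma alpha_iterate (hA : ∀ I : TwoSidedIdeal A, IsClosed (I : Set A) → I = ⊥ ∨ I = ⊤)
    (α : C(X, A) ≃⋆ₐ[ℂ] C(X, A)) (m : ℕ) (k : C(X, ℂ)) :
    (⇑α)^[m] (iotaA X A k) =
      iotaA X A (k.comp ⟨(sigmaMap hA α)^[m], (sigmaMap_continuous hA α).iterate m⟩) := by
  induction m generalizing k with
  | zero => rfl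
  | succ m ih =>
    rw [Function.iterate_succ_apply', ih, alpha_iota hA α]
    rfl

/-- Key vanishing lemma: if `f` vanishes at `sigmaMap y`, then `α f` vanishes at `y`. -/
lemma alpha_vanish (hA : ∀ I : TwoSidedIdeal A, IsClosed (I : Set A) → I = ⊥ ∨ I = ⊤)
    (α : C(X, A) ≃⋆ₐ[ℂ] C(X, A)) (f : C(X, A)) (y : X)
    (hf : f (sigmaMap hA α y) = 0) : α f y = 0 := by
  letI : CStarAlgebra A := {}
  have hnorm : ∀ w : C(X, A), ‖α w‖ = ‖w‖ := fun w =>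
    NonUnitalStarAlgHom.norm_map α (EquivLike.injective α) w
  rw [← norm_le_zero_iff]
  refine le_of_forall_pos_le_add fun δ hδ => ?_
  rw [zero_add]
  -- find a ball around `sigmaMap y` where `‖f‖ < δ`
  have hcont : ContinuousAt f (sigmaMap hA α y) := f.continuous.continuousAt
  rw [Metric.continuousAt_iff] at hcont
  obtain ⟨r, hr, hball⟩ := hcont δ hδ
  set h : C(X, ℂ) := bumpC (sigmaMap hA α y) r with hh
  have hdecomp : α f y = α (f * iotaA X A h) y := by
    have hsplit : f = f * iotaA X A h + f * (1 - iotaA X A h) := by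
      rw [← mul_add, add_sub_cancel, mul_one]
    calc α f y = (α (f * iotaA X A h) + α f * α (1 - iotaA X A h)) y := by
          conv_lhs => rw [hsplit]
          rw [map_add, map_mul α f (1 - iotaA X A h)]
      _ = α (f * iotaA X A h) y + α f y * α (1 - iotaA X A h) y := rfl
      _ = α (f * iotaA X A h) y := by
          rw [map_sub, map_one, alpha_iota hA α]
          simp only [ContinuousMap.sub_apply, ContinuousMap.one_apply, iotaA_apply,
            ContinuousMap.comp_apply, ContinuousMap.coe_mk]
          rw [bumpC_apply, bumpFn_self]
          simp
  rw [hdecomp]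
  calc ‖α (f * iotaA X A h) y‖ ≤ ‖α (f * iotaA X A h)‖ :=
        ContinuousMap.norm_coe_le_norm _ y
    _ = ‖f * iotaA X A h‖ := hnorm _
    _ ≤ δ := by
        rw [ContinuousMap.norm_le _ hδ.le]
        intro x
        simp only [ContinuousMap.mul_apply, iotaA_apply, hh, bumpC_apply]
        rw [mul_smul_comm, mul_one]
        rw [norm_smul]
        by_cases hx : bumpFn (sigmaMap hA α y) r x = 0
        · rw [hx]; simpa using hδ.le
        · have hlt : dist x (sigmaMap hA α y) < r := bumpFn_support _ _ hr _ hx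
          have h1 : ‖f x‖ ≤ δ := by
            have := hball hlt
            rw [hf, dist_zero_right] at this
            exact this.le
          have h2 : ‖(bumpFn (sigmaMap hA α y) r x : ℂ)‖ ≤ 1 := by
            rw [Complex.norm_real, Real.norm_eq_abs,
              abs_of_nonneg (bumpFn_nonneg _ _ _)]
            exact bumpFn_le_one _ _ hr _
          calc ‖(bumpFn (sigmaMap hA α y) r x : ℂ)‖ * ‖f x‖ ≤ 1 * δ :=
                mul_le_mul h2 h1 (norm_nonneg _) zero_le_one
            _ = δ := one_mul δ

end Iterate

section NoPeriodic

variable {X : Type*} [MetricSpace X] [CompactSpace X] [Infinite X]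
variable {A : Type*} [NormedRing A] [StarRing A] [CStarRing A] [NormedAlgebra ℂ A]
  [CompleteSpace A] [StarModule ℂ A] [Nontrivial A]

lemma no_periodic (hA : ∀ I : TwoSidedIdeal A, IsClosed (I : Set A) → I = ⊥ ∨ I = ⊤)
    (α : C(X, A) ≃⋆ₐ[ℂ] C(X, A))
    (hαsimple : ∀ I : TwoSidedIdeal C(X, A), IsClosed (I : Set C(X, A)) →
      (∀ f ∈ I, α f ∈ I) → I = ⊥ ∨ I = ⊤)
    (x : X) (m : ℕ) (hm : 1 ≤ m) (hper : (sigmaMap hA α)^[m] x = x) : False := by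
  set σ : X → X := sigmaMap hA α with hσ
  set S : Set C(X, A) := {f | ∀ j < m, f (σ^[j] x) = 0} with hS
  have hzero : (0 : C(X, A)) ∈ S := fun j _ => rfl
  have hadd : ∀ {f g : C(X, A)}, f ∈ S → g ∈ S → f + g ∈ S := by
    intro f g hf hg j hj
    simp only [ContinuousMap.add_apply, hf j hj, hg j hj, add_zero]
  have hneg : ∀ {f : C(X, A)}, f ∈ S → -f ∈ S := by
    intro f hf j hj
    simp only [ContinuousMap.neg_apply, hf j hj, neg_zero]
  have hmull : ∀ {f g : C(X, A)}, g ∈ S → f * g ∈ S := by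
    intro f g hg j hj
    simp only [ContinuousMap.mul_apply, hg j hj, mul_zero]
  have hmulr : ∀ {f g : C(X, A)}, f ∈ S → f * g ∈ S := by
    intro f g hf j hj
    simp only [ContinuousMap.mul_apply, hf j hj, zero_mul]
  let I : TwoSidedIdeal C(X, A) := TwoSidedIdeal.mk' S hzero hadd hneg hmull hmulr
  have hcoe : (I : Set C(X, A)) = S := TwoSidedIdeal.coe_mk' _ _ _ _ _ _
  have hmem : ∀ f : C(X, A), f ∈ I ↔ f ∈ S := fun f =>
    TwoSidedIdeal.mem_mk' _ _ _ _ _ _ f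
  have hclosed : IsClosed (I : Set C(X, A)) := by
    rw [hcoe]
    have : S = ⋂ (j : ℕ) (_ : j < m), (fun f : C(X, A) => f (σ^[j] x)) ⁻¹' {0} := by
      ext f
      simp [hS, Set.mem_iInter]
    rw [this]
    exact isClosed_iInter fun j => isClosed_iInter fun _ =>
      isClosed_singleton.preimage (continuous_eval_const _)
  have hinv : ∀ f ∈ I, α f ∈ I := by
    intro f hf
    rw [hmem] at hf ⊢
    intro j hj
    refine alpha_vanish hA α f (σ^[j] x) ?_
    show f (σ (σ^[j] x)) = 0
    have hit : σ (σ^[j] x) = σ^[j+1] x := (Function.iterate_succ_apply' σ j x).symm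
    rw [hit]
    rcases Nat.lt_or_ge (j + 1) m with h1 | h1
    · exact hf (j + 1) h1
    · have : j + 1 = m := le_antisymm (Nat.succ_le_of_lt hj) h1
      rw [this, hper]
      simpa using hf 0 (lt_of_lt_of_le one_pos hm)
  rcases hαsimple I hclosed hinv with hbot | htop
  · -- find a point outside the orbit
    have hFfin : (Set.Finite ((fun j => σ^[j] x) '' Set.Iio m)) :=
      (Set.finite_Iio m).image _
    obtain ⟨p, hp⟩ := hFfin.infinite_compl.nonempty
    have hpne : ∀ j < m, p ≠ σ^[j] x := by
      intro j hj hpj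
      exact hp ⟨j, hj, hpj.symm⟩
    let k : C(X, ℝ) := ⟨fun z => ∏ j ∈ Finset.range m, dist z (σ^[j] x),
      continuous_finset_prod _ fun j _ => continuous_id.dist continuous_const⟩
    let kC : C(X, ℂ) := ⟨fun z => (k z : ℂ), Complex.continuous_ofReal.comp k.continuous⟩
    have hkI : iotaA X A kC ∈ I := by
      rw [hmem]
      intro j hj
      rw [iotaA_apply]
      have : k (σ^[j] x) = 0 :=
        Finset.prod_eq_zero (Finset.mem_range.mpr hj) (dist_self _)
      simp [kC, this]
    rw [hbot, TwoSidedIdeal.mem_bot] at hkI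
    have := congrArg (fun w : C(X, A) => w p) hkI
    simp only [iotaA_apply, ContinuousMap.zero_apply] at this
    have hkp : k p ≠ 0 := by
      show (∏ j ∈ Finset.range m, dist p (σ^[j] x)) ≠ 0
      refine Finset.prod_ne_zero_iff.mpr fun j hj => ?_
      exact dist_ne_zero.mpr (hpne j (Finset.mem_range.mp hj))
    rcases smul_eq_zero.mp this with hc | h1
    · have hc' : ((k p : ℝ) : ℂ) = 0 := hc
      exact hkp (by exact_mod_cast hc')
    · exact one_ne_zero h1
  · have h1I : (1 : C(X, A)) ∈ I := by rw [htop]; exact TwoSidedIdeal.mem_top _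
    rw [hmem] at h1I
    have := h1I 0 (lt_of_lt_of_le one_pos hm)
    simp only [Function.iterate_zero, id_eq, ContinuousMap.one_apply] at this
    exact one_ne_zero this

end NoPeriodic

/-- Let `X` be an infinite compact metric space, `A` a unital simple
C*-algebra and `α` a *-automorphism of `C(X,A)` such that `C(X,A)` is `α`-simple.
Then for every positive `f ∈ C(X,A)`, every finite family `f₁, ..., fₙ ∈ C(X,A)`,
positive integers `s₁, ..., sₙ` and `ε > 0`, there exists a positive `g ∈ C(X,A)`
with `‖g‖ = 1`, `‖g f g‖ ≥ ‖f‖ - ε` and `‖g fᵢ α^{sᵢ}(g)‖ ≤ ε` for each `i`.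
(Positivity of an element `a` of a C*-algebra is expressed as `a = star h * h`
for some `h`.) -/
theorem kishimoto_type_estimate
    (X : Type*) [MetricSpace X] [CompactSpace X] [Infinite X]
    (A : Type*) [NormedRing A] [StarRing A] [CStarRing A] [NormedAlgebra ℂ A]
    [CompleteSpace A] [StarModule ℂ A] [Nontrivial A]
    (hA : ∀ I : TwoSidedIdeal A, IsClosed (I : Set A) → I = ⊥ ∨ I = ⊤)
    (α : C(X, A) ≃⋆ₐ[ℂ] C(X, A))
    (hαsimple : ∀ I : TwoSidedIdeal C(X, A), IsClosed (I : Set C(X, A)) →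
      (∀ f ∈ I, α f ∈ I) → I = ⊥ ∨ I = ⊤)
    (f : C(X, A)) (hf : ∃ h : C(X, A), f = star h * h)
    (n : ℕ) (fv : Fin n → C(X, A)) (s : Fin n → ℕ) (hs : ∀ i, 1 ≤ s i)
    (ε : ℝ) (hε : 0 < ε) :
    ∃ g : C(X, A), (∃ h : C(X, A), g = star h * h) ∧ ‖g‖ = 1 ∧
      ‖f‖ - ε ≤ ‖g * f * g‖ ∧
      ∀ i : Fin n, ‖g * fv i * (⇑α)^[s i] g‖ ≤ ε := by
  classical
  set σ : X → X := sigmaMap hA α with hσ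
  have hσc : Continuous σ := sigmaMap_continuous hA α
  obtain ⟨x₀, -, hx₀'⟩ := (isCompact_univ (X := X)).exists_isMaxOn
    ⟨Classical.arbitrary X, trivial⟩ (f.continuous.norm.continuousOn)
  have hx₀ : ∀ z : X, ‖f z‖ ≤ ‖f x₀‖ := fun z => hx₀' (Set.mem_univ z)
  have hne : ∀ i : Fin n, σ^[s i] x₀ ≠ x₀ := fun i h =>
    no_periodic hA α hαsimple x₀ (s i) (hs i) h
  set d : Fin n → ℝ := fun i => dist (σ^[s i] x₀) x₀ with hd'
  have hd : ∀ i, 0 < d i := fun i => dist_pos.mpr (hne i)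
  have hcont : ∀ i : Fin n, ∃ δ > 0, ∀ z : X, dist z x₀ < δ →
      dist (σ^[s i] z) (σ^[s i] x₀) < d i / 2 := by
    intro i
    have h1 : ContinuousAt (σ^[s i]) x₀ := (hσc.iterate (s i)).continuousAt
    rw [Metric.continuousAt_iff] at h1
    obtain ⟨δ, hδ, hδ'⟩ := h1 (d i / 2) (half_pos (hd i))
    exact ⟨δ, hδ, fun z hz => hδ' hz⟩
  choose δf hδf hδf' using hcont
  obtain ⟨r, hr, hrle⟩ : ∃ r > 0, ∀ i : Fin n, r ≤ min (δf i) (d i / 2) := by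
    rcases isEmpty_or_nonempty (Fin n) with hemp | hne'
    · exact ⟨1, one_pos, fun i => hemp.elim i⟩
    · refine ⟨Finset.univ.inf' Finset.univ_nonempty (fun i => min (δf i) (d i / 2)), ?_, ?_⟩
      · exact (Finset.lt_inf'_iff _).mpr fun i _ => lt_min (hδf i) (half_pos (hd i))
      · exact fun i => Finset.inf'_le _ (Finset.mem_univ i)
  set g : C(X, A) := iotaA X A (bumpC x₀ r) with hg
  have hgx₀ : g x₀ = 1 := by
    rw [hg, iotaA_apply, bumpC_apply, bumpFn_self, Complex.ofReal_one, one_smul]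
  refine ⟨g, ?_, ?_, ?_, ?_⟩
  · -- positivity
    refine ⟨iotaA X A ⟨fun z => (Real.sqrt (bumpFn x₀ r z) : ℂ),
      Complex.continuous_ofReal.comp (Real.continuous_sqrt.comp (bumpFn x₀ r).continuous)⟩, ?_⟩
    rw [hg, ← map_star, ← map_mul]
    refine congrArg (iotaA X A) (ContinuousMap.ext fun z => ?_)
    simp only [ContinuousMap.mul_apply, ContinuousMap.star_apply, ContinuousMap.coe_mk,
      bumpC_apply]
    rw [Complex.star_def, Complex.conj_ofReal, ← Complex.ofReal_mul,
      Real.mul_self_sqrt (bumpFn_nonneg x₀ r z)]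
  · -- norm one
    refine le_antisymm ((ContinuousMap.norm_le _ zero_le_one).mpr fun z => ?_) ?_
    · rw [hg, iotaA_apply, norm_smul, CStarRing.norm_one, mul_one, bumpC_apply,
        Complex.norm_real, Real.norm_eq_abs, abs_of_nonneg (bumpFn_nonneg x₀ r z)]
      exact bumpFn_le_one x₀ r hr z
    · calc (1 : ℝ) = ‖g x₀‖ := by rw [hgx₀, CStarRing.norm_one]
        _ ≤ ‖g‖ := ContinuousMap.norm_coe_le_norm g x₀
  · -- lower bound
    have heval : (g * f * g) x₀ = f x₀ := by
      simp only [ContinuousMap.mul_apply, hgx₀, one_mul, mul_one]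
    calc ‖f‖ - ε ≤ ‖f‖ := by linarith
      _ ≤ ‖f x₀‖ := (ContinuousMap.norm_le _ (norm_nonneg _)).mpr fun z => hx₀ z
      _ = ‖(g * f * g) x₀‖ := by rw [heval]
      _ ≤ ‖g * f * g‖ := ContinuousMap.norm_coe_le_norm _ x₀
  · -- smallness
    intro i
    have hiter : (⇑α)^[s i] g =
        iotaA X A ((bumpC x₀ r).comp ⟨σ^[s i], hσc.iterate (s i)⟩) :=
      alpha_iterate hA α (s i) (bumpC x₀ r)
    have hzero : g * fv i * (⇑α)^[s i] g = 0 := by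
      rw [hiter, hg]
      ext z
      simp only [ContinuousMap.mul_apply, iotaA_apply, ContinuousMap.comp_apply,
        ContinuousMap.coe_mk, ContinuousMap.zero_apply, bumpC_apply]
      by_cases hz : bumpFn x₀ r z = 0
      · rw [hz]
        simp
      · have h1 : dist z x₀ < r := bumpFn_support _ _ hr _ hz
        have h2 : bumpFn x₀ r (σ^[s i] z) = 0 := by
          by_contra h2
          have h3 : dist (σ^[s i] z) x₀ < r := bumpFn_support _ _ hr _ h2
          have h4 : dist (σ^[s i] z) (σ^[s i] x₀) < d i / 2 :=
            hδf' i z (lt_of_lt_of_le h1 (le_trans (hrle i) (min_le_left _ _)))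
          have h5 : d i ≤ dist (σ^[s i] x₀) (σ^[s i] z) + dist (σ^[s i] z) x₀ :=
            dist_triangle _ _ _
          rw [dist_comm] at h4
          have h6 : dist (σ^[s i] z) x₀ < d i / 2 :=
            lt_of_lt_of_le h3 (le_trans (hrle i) (min_le_right _ _))
          linarith
        rw [h2]
        simp
    rw [hzero, norm_zero]
    exact hε.le
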